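/- Let y, d be interior points of K_soc ⊂ ℝ^{1+m} with y ∘ d = μe, μ > 0, and 2y_0 = b_0 > 0. Then d_0 = (μ + √(μ² + b_0²‖d̄‖²))/b_0. -/

import Mathlib

open scoped RealInnerProductSpace

/-- The Jordan algebra `E_{1+m}` of quadratic forms: pairs `(x₀, x̄)`. -/
abbrev E (m : ℕ) : Type := ℝ × EuclideanSpace ℝ (Fin m)

/-- The Jordan product `x ∘ y = (xᵀy, x₀ ȳ + y₀ x̄)`. -/
noncomputable def jmul {m : ℕ} (x y : E m) : E m :=
  (x.1 * y.1 + ⟪x.2, y.2⟫, x.1 • y.2 + y.1 • x.2)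

/-- The standard Euclidean inner product on `ℝ^{1+m}`. -/
noncomputable def jip {m : ℕ} (x y : E m) : ℝ := x.1 * y.1 + ⟪x.2, y.2⟫

/-- The determinant `det x = x₀² - ‖x̄‖²`. -/
noncomputable def socDet {m : ℕ} (x : E m) : ℝ := x.1 ^ 2 - ‖x.2‖ ^ 2

/-- The diagonal mirroring operator `R = diag(1, -I)`. -/
def Rop {m : ℕ} (x : E m) : E m := (x.1, -x.2)

/-- The unit element `e = (1, 0)`. -/
noncomputable def socUnit (m : ℕ) : E m := (1, 0)

/-- The second-order cone `K_soc = { x : x₀ ≥ ‖x̄‖ }`. -/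
def Ksoc (m : ℕ) : Set (E m) := {x | ‖x.2‖ ≤ x.1}

theorem soc_d0_formula {m : ℕ} (y d : E m) (μ b₀ : ℝ) (hμ : 0 < μ) (hb : 0 < b₀)
    (hy : ‖y.2‖ < y.1) (hd : ‖d.2‖ < d.1)
    (hyd : jmul y d = μ • socUnit m) (hcon : 2 * y.1 = b₀) :
    d.1 = (μ + Real.sqrt (μ ^ 2 + b₀ ^ 2 * ‖d.2‖ ^ 2)) / b₀ := by
  have hd1 : (0:ℝ) < d.1 := lt_of_le_of_lt (norm_nonneg _) hd
  have h1 : y.1 * d.1 + ⟪y.2, d.2⟫ = μ := by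
    have := congrArg Prod.fst hyd
    simpa [jmul, socUnit] using this
  have h2 : y.1 • d.2 + d.1 • y.2 = 0 := by
    have := congrArg Prod.snd hyd
    simpa [jmul, socUnit] using this
  have hy2 : y.2 = (-(y.1 / d.1)) • d.2 := by
    have : d.1 • y.2 = -(y.1 • d.2) := by linear_combination (norm := module) h2
    have h3 : d.1 • y.2 = d.1 • ((-(y.1 / d.1)) • d.2) := by
      rw [smul_smul, show d.1 * -(y.1 / d.1) = -y.1 by field_simp, this, neg_smul]
    exact smul_right_injective _ (ne_of_gt hd1) h3
  have hip : ⟪y.2, d.2⟫ = -(y.1 / d.1) * ‖d.2‖ ^ 2 := by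
    rw [hy2, real_inner_smul_left, real_inner_self_eq_norm_sq]
  have hkey : b₀ * d.1 ^ 2 - 2 * μ * d.1 - b₀ * ‖d.2‖ ^ 2 = 0 := by
    have h1' : y.1 * d.1 + (-(y.1 / d.1) * ‖d.2‖ ^ 2) = μ := by rw [← hip]; exact h1
    field_simp at h1'
    nlinarith [h1']
  have hbd : μ < b₀ * d.1 := by nlinarith [hkey, mul_pos hμ hd1, mul_nonneg hb.le (sq_nonneg ‖d.2‖)]
  have hsq : Real.sqrt (μ ^ 2 + b₀ ^ 2 * ‖d.2‖ ^ 2) = b₀ * d.1 - μ := by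
    rw [show μ ^ 2 + b₀ ^ 2 * ‖d.2‖ ^ 2 = (b₀ * d.1 - μ) ^ 2 by nlinarith [hkey]]
    exact Real.sqrt_sq (by linarith)
  rw [hsq]
  field_simp
  ring
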